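/- Consider the majority game on the complete simple graph with n ≥ 2 nodes. No subset of players of cardinality strictly smaller than ⌊n/2⌋ is a sufficient control set; hence every subset of cardinality ⌊n/2⌋ is an optimal sufficient control set. -/

import Mathlib

open Finset

/-- The indicator strategy profile `𝟙_S` of a set of players `S`: action `1` (here `true`)
on `S` and `0` (here `false`) elsewhere. -/
def indicator {V : Type*} [DecidableEq V] (S : Finset V) : V → Bool :=
  fun i => decide (i ∈ S)

/-- A finite binary-action game with utilities `u` is super-modular (has increasing
differences) if for every player `i` and profiles `x, y` with `x_{-i} ≥ y_{-i}`
componentwise, `u_i(1, x_{-i}) − u_i(0, x_{-i}) ≥ u_i(1, y_{-i}) − u_i(0, y_{-i})`. -/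
def Supermodular {V : Type*} [DecidableEq V] (u : V → (V → Bool) → ℝ) : Prop :=
  ∀ (i : V) (x y : V → Bool), (∀ j, j ≠ i → y j ≤ x j) →
    u i (Function.update y i true) - u i (Function.update y i false) ≤
      u i (Function.update x i true) - u i (Function.update x i false)

/-- An improvement path from `S` to `T`: a sequence of profiles starting at `𝟙_S` and ending
at `𝟙_T` such that at each step some player `i ∉ S` flips her action (the profile changes
exactly in coordinate `i`) without decreasing her utility. -/
def IsImprovementPath {V : Type*} [Fintype V] [DecidableEq V]
    (u : V → (V → Bool) → ℝ) (S T : Finset V) : Prop :=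
  ∃ (m : ℕ) (x : ℕ → V → Bool),
    x 0 = indicator S ∧ x m = indicator T ∧
    ∀ k < m, ∃ i, i ∉ S ∧
      x (k + 1) = Function.update (x k) i (!(x k i)) ∧
      u i (x k) ≤ u i (x (k + 1))

/-- `S` is a sufficient control set if there is an improvement path from `S` to the whole
player set `V`. -/
def SufficientControlSet {V : Type*} [Fintype V] [DecidableEq V]
    (u : V → (V → Bool) → ℝ) (S : Finset V) : Prop :=
  IsImprovementPath u S Finset.univ

/-- Utilities of the majority game on a finite simple undirected graph `G`: the utility of
player `i` at profile `x` is the number of neighbors `j` of `i` with `x_j = x_i`. -/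
def majU {V : Type*} [Fintype V] [DecidableEq V] (G : SimpleGraph V) [DecidableRel G.Adj] :
    V → (V → Bool) → ℝ :=
  fun i x => ((G.neighborFinset i).filter (fun j => x j = x i)).card

section Helpers

variable {V : Type*} [Fintype V] [DecidableEq V]

open Finset

def tcount (x : V → Bool) : ℕ := (univ.filter (fun j => x j = true)).card

lemma neighborFinset_top' (i : V) :
    (⊤ : SimpleGraph V).neighborFinset i = univ.erase i := by
  ext j
  simp [SimpleGraph.mem_neighborFinset, ne_comm, eq_comm]

lemma majU_top (i : V) (x : V → Bool) :
    majU (⊤ : SimpleGraph V) i x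
      = (((univ.erase i)).filter (fun j => x j = x i)).card := by
  simp only [majU, neighborFinset_top']

lemma card_false (x : V → Bool) :
    (univ.filter (fun j : V => x j = false)).card = Fintype.card V - tcount x := by
  have h := Finset.card_filter_add_card_filter_not
    (s := (univ : Finset V)) (p := fun j => x j = true)
  simp only [Finset.card_univ] at h
  have : (univ.filter (fun j : V => ¬ x j = true)) = (univ.filter (fun j : V => x j = false)) := by
    apply Finset.filter_congr; intro j _; simp
  rw [this] at h
  unfold tcount
  omega

lemma majU_false (i : V) (x : V → Bool) (hxi : x i = false) :
    majU (⊤ : SimpleGraph V) i x = ((Fintype.card V - tcount x) - 1 : ℕ) := by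
  rw [majU_top, hxi]
  congr 1
  rw [Finset.filter_erase, Finset.card_erase_of_mem, card_false]
  simp [hxi]

lemma majU_update_true (i : V) (x : V → Bool) (hxi : x i = false) :
    majU (⊤ : SimpleGraph V) i (Function.update x i true) = (tcount x : ℕ) := by
  rw [majU_top]
  have h1 : ((univ.erase i).filter
      (fun j => Function.update x i true j = Function.update x i true i))
      = (univ.erase i).filter (fun j => x j = true) := by
    apply Finset.filter_congr
    intro j hj
    rw [Finset.mem_erase] at hj
    simp [Function.update_apply, hj.1]
  rw [h1, Finset.filter_erase, Finset.erase_eq_of_notMem (by simp [hxi])]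
  rfl

lemma up_cond {x : V → Bool} {i : V} (hxi : x i = false)
    (h : majU (⊤ : SimpleGraph V) i x
        ≤ majU (⊤ : SimpleGraph V) i (Function.update x i true)) :
    Fintype.card V ≤ 2 * tcount x + 1 := by
  rw [majU_false i x hxi, majU_update_true i x hxi, Nat.cast_le] at h
  have := Finset.card_filter_le (univ : Finset V) (fun j => x j = true)
  simp only [Finset.card_univ] at this
  unfold tcount at *
  omega

lemma up_ok {x : V → Bool} {i : V} (hxi : x i = false)
    (h : Fintype.card V ≤ 2 * tcount x + 1) :
    majU (⊤ : SimpleGraph V) i x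
      ≤ majU (⊤ : SimpleGraph V) i (Function.update x i true) := by
  rw [majU_false i x hxi, majU_update_true i x hxi, Nat.cast_le]
  omega

lemma tcount_indicator (S : Finset V) : tcount (indicator S) = S.card := by
  unfold tcount indicator
  congr 1
  ext j; simp

lemma tcount_step {x x' : V → Bool} {i : V}
    (hx' : x' = Function.update x i (!(x i)))
    (hu : majU (⊤ : SimpleGraph V) i x ≤ majU (⊤ : SimpleGraph V) i x')
    (ht : tcount x < Fintype.card V / 2) :
    tcount x' < Fintype.card V / 2 := by
  cases hxi : x i with
  | false =>
    exfalso
    rw [hxi] at hx'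
    simp only [Bool.not_false] at hx'
    rw [hx'] at hu
    have := up_cond hxi hu
    omega
  | true =>
    have hsub : (univ.filter (fun j : V => x' j = true)) ⊆
        (univ.filter (fun j : V => x j = true)) := by
      intro j hj
      rw [Finset.mem_filter] at hj ⊢
      refine ⟨hj.1, ?_⟩
      rcases eq_or_ne j i with rfl | hne
      · exact hxi
      · rw [hx'] at hj
        rw [← hj.2, Function.update_of_ne hne]
    have := Finset.card_le_card hsub
    unfold tcount at *
    omega

lemma indicator_insert (i : V) (S : Finset V) (hi : i ∉ S) :
    indicator (insert i S) = Function.update (indicator S) i true := by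
  funext j
  rcases eq_or_ne j i with rfl | hne
  · simp [indicator]
  · simp [indicator, Function.update_of_ne hne, Finset.mem_insert, hne]

lemma suff_aux (k : ℕ) : ∀ S : Finset V, (univ \ S).card = k →
    Fintype.card V ≤ 2 * S.card + 1 →
    SufficientControlSet (majU (⊤ : SimpleGraph V)) S := by
  induction k with
  | zero =>
    intro S hk _
    have hS : S = univ := by
      rw [Finset.card_eq_zero, Finset.sdiff_eq_empty_iff_subset] at hk
      exact Finset.eq_univ_of_forall (fun j => hk (Finset.mem_univ j))
    exact ⟨0, fun _ => indicator S, rfl, by rw [hS], fun k hk => absurd hk (by omega)⟩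
  | succ k ih =>
    intro S hk hS
    have hne : (univ \ S).Nonempty := by
      rw [← Finset.card_pos, hk]; omega
    obtain ⟨i, hi⟩ := hne
    have hiS : i ∉ S := (Finset.mem_sdiff.mp hi).2
    have hk' : (univ \ insert i S).card = k := by
      rw [Finset.sdiff_insert, Finset.card_erase_of_mem hi, hk]; omega
    have hS' : Fintype.card V ≤ 2 * (insert i S).card + 1 := by
      rw [Finset.card_insert_of_notMem hiS]; omega
    obtain ⟨m, y, hy0, hym, hystep⟩ := ih (insert i S) hk' hS'
    refine ⟨m + 1, fun j => if j = 0 then indicator S else y (j - 1), by simp, by simpa using hym, ?_⟩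
    intro k' hk'lt
    cases k' with
    | zero =>
      have h0 : indicator S i = false := by simp [indicator, hiS]
      refine ⟨i, hiS, ?_, ?_⟩
      · show y 0 = Function.update (indicator S) i (!(indicator S i))
        rw [hy0, indicator_insert i S hiS, h0]
        rfl
      · show majU (⊤ : SimpleGraph V) i (indicator S) ≤ majU (⊤ : SimpleGraph V) i (y 0)
        rw [hy0, indicator_insert i S hiS]
        apply up_ok h0
        rw [tcount_indicator]; omega
    | succ j =>
      have hj : j < m := by omega
      obtain ⟨i', hi'S', hupd, hu⟩ := hystep j hj
      exact ⟨i', fun h => hi'S' (Finset.mem_insert_of_mem h), hupd, hu⟩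

end Helpers

/-- For the majority game on the complete simple graph with `n ≥ 2` nodes, no subset of
players of cardinality strictly smaller than `⌊n/2⌋` is a sufficient control set; hence
every subset of cardinality `⌊n/2⌋` is an optimal sufficient control set. -/
theorem complete_graph_half_optimal
    {V : Type*} [Fintype V] [DecidableEq V] (n : ℕ) (hn : 2 ≤ n)
    (hcard : Fintype.card V = n) :
    (∀ S : Finset V, S.card < n / 2 →
        ¬ SufficientControlSet (majU (⊤ : SimpleGraph V)) S) ∧
    (∀ S : Finset V, S.card = n / 2 →
        SufficientControlSet (majU (⊤ : SimpleGraph V)) S ∧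
        ∀ T : Finset V, SufficientControlSet (majU (⊤ : SimpleGraph V)) T →
          S.card ≤ T.card) := by
  constructor
  · rintro S hSlt ⟨m, x, h0, hm, hstep⟩
    have key : ∀ k ≤ m, tcount (x k) < Fintype.card V / 2 := by
      intro k
      induction k with
      | zero => intro _; rw [h0, tcount_indicator, hcard]; omega
      | succ k ihk =>
        intro hkm
        obtain ⟨i, _, hupd, hu⟩ := hstep k (by omega)
        exact tcount_step hupd hu (ihk (by omega))
    have := key m le_rfl
    rw [hm, tcount_indicator, Finset.card_univ, hcard] at this
    omega
  · intro S hS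
    have hsuff : ∀ T : Finset V, T.card = n / 2 →
        SufficientControlSet (majU (⊤ : SimpleGraph V)) T := by
      intro T hT
      exact suff_aux (univ \ T).card T rfl (by rw [hcard, hT]; omega)
    refine ⟨hsuff S hS, ?_⟩
    intro T hT
    by_contra hlt
    push_neg at hlt
    rw [hS] at hlt
    -- T.card < n / 2, contradiction with first part
    have : ¬ SufficientControlSet (majU (⊤ : SimpleGraph V)) T := by
      rintro ⟨m, x, h0, hm, hstep⟩
      have key : ∀ k ≤ m, tcount (x k) < Fintype.card V / 2 := by
        intro k
        induction k with
        | zero => intro _; rw [h0, tcount_indicator, hcard]; omega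
        | succ k ihk =>
          intro hkm
          obtain ⟨i, _, hupd, hu⟩ := hstep k (by omega)
          exact tcount_step hupd hu (ihk (by omega))
      have := key m le_rfl
      rw [hm, tcount_indicator, Finset.card_univ, hcard] at this
      omega
    exact this hT
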